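/- Let b(g,k) be Harer–Zagier coefficients and let 𝔟(g,k) := b(g,k)/(4g+2k−1)!! be the renormalized coefficients. Then for every g ≥ 2: 𝔟(g,g−2) = (9/10)·g·(g−1)·𝔟(g,g−1), and explicitly b(g,g−2) = (1/5)·2^{g−2}·(6g−5)!!/(3^{g−2}·(g−2)!). -/

import Mathlib

open scoped Nat

theorem stmt5
    (b : ℕ → ℤ → ℚ)
    (hb_supp : ∀ g : ℕ, 1 ≤ g → ∀ k : ℤ, ¬ (0 ≤ k ∧ k ≤ (g : ℤ) - 1) → b g k = 0)
    (hb1 : b 1 0 = 1)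
    (hrec : ∀ g : ℕ, 1 ≤ g → ∀ k : ℤ, 0 ≤ k → k ≤ (g : ℤ) →
      (4 * (g : ℚ) + 2 * (k : ℚ) + 6) * b (g + 1) k =
        (4 * (g : ℚ) + 2 * (k : ℚ) + 1) * (4 * (g : ℚ) + 2 * (k : ℚ) + 3) *
          ((4 * (g : ℚ) + 2 * (k : ℚ) + 2) * b g k
            + 4 * (4 * (g : ℚ) + 2 * (k : ℚ) - 1) * b g (k - 1))) :
    ∀ g : ℕ, 2 ≤ g →
      b g ((g : ℤ) - 2) / (((6 * g - 5)‼ : ℕ) : ℚ) =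
        (9 / 10) * (g : ℚ) * ((g : ℚ) - 1) * (b g ((g : ℤ) - 1) / (((6 * g - 3)‼ : ℕ) : ℚ)) ∧
      b g ((g : ℤ) - 2) =
        (1 / 5) * 2 ^ (g - 2) * (((6 * g - 5)‼ : ℕ) : ℚ) / (3 ^ (g - 2) * ((g - 2)! : ℚ)) := by
  have hdfne : ∀ n : ℕ, ((n‼ : ℕ) : ℚ) ≠ 0 := fun n => by
    exact_mod_cast (Nat.doubleFactorial_pos n).ne'
  have hfne : ∀ n : ℕ, ((n ! : ℕ) : ℚ) ≠ 0 := fun n => by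
    exact_mod_cast (Nat.factorial_pos n).ne'
  have hA : ∀ g : ℕ, b (g + 1) (g : ℤ) =
      2 ^ g * (((6 * g + 3)‼ : ℕ) : ℚ) / (3 ^ (g + 1) * ((g + 1)! : ℚ)) := by
    intro g
    induction g with
    | zero => norm_num [hb1, Nat.doubleFactorial]
    | succ n ih =>
      have h0 : b (n + 1) ((n : ℤ) + 1) = 0 := by
        apply hb_supp (n + 1) (by omega)
        push_cast; omega
      have hr := hrec (n + 1) (by omega) ((n : ℤ) + 1) (by positivity) (by push_cast; omega)
      push_cast at hr
      rw [h0] at hr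
      have hk : ((n : ℤ) + 1) - 1 = (n : ℤ) := by ring
      rw [hk, ih] at hr
      have hdf : ((6 * (n + 1) + 3)‼ : ℕ) = (6 * n + 9) * ((6 * n + 7) * ((6 * n + 5) * (6 * n + 3)‼)) := by
        rw [show 6 * (n + 1) + 3 = (6 * n + 7) + 2 by omega, Nat.doubleFactorial_add_two,
          show 6 * n + 7 = (6 * n + 5) + 2 by omega, Nat.doubleFactorial_add_two,
          show 6 * n + 5 = (6 * n + 3) + 2 by omega, Nat.doubleFactorial_add_two]
      have hfa : ((n + 1) + 1)! = ((n + 1) + 1) * (n + 1)! := Nat.factorial_succ _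
      push_cast [hdf, hfa]
      have h12 : (6 : ℚ) * n + 12 ≠ 0 := by positivity
      have h3 : (3 : ℚ) ^ (n + 1) ≠ 0 := by positivity
      field_simp at hr ⊢
      linear_combination hr / 2
  have hB : ∀ g : ℕ, b (g + 2) (g : ℤ) =
      (1 / 5) * 2 ^ g * (((6 * g + 7)‼ : ℕ) : ℚ) / (3 ^ g * (g ! : ℚ)) := by
    intro g
    induction g with
    | zero =>
      have h0 : b 1 (0 - 1) = 0 := by
        apply hb_supp 1 (by omega)
        norm_num
      have hr := hrec 1 (by omega) 0 le_rfl (by norm_num)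
      rw [h0, hb1] at hr
      norm_num at hr
      norm_num [Nat.doubleFactorial]
      linarith
    | succ n ih =>
      have hr := hrec (n + 2) (by omega) ((n : ℤ) + 1) (by positivity) (by push_cast; omega)
      push_cast at hr
      have hk : ((n : ℤ) + 1) - 1 = (n : ℤ) := by ring
      rw [hk, ih] at hr
      have hAn : b (n + 2) ((n : ℤ) + 1) = 2 ^ (n + 1) * (((6 * (n + 1) + 3)‼ : ℕ) : ℚ) /
          (3 ^ (n + 2) * (((n + 2))! : ℚ)) := by
        have := hA (n + 1)
        push_cast at this ⊢
        convert this using 2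
      rw [hAn] at hr
      have hdf : ((6 * (n + 1) + 7)‼ : ℕ) = (6 * n + 13) * ((6 * n + 11) * ((6 * n + 9) * (6 * n + 7)‼)) := by
        rw [show 6 * (n + 1) + 7 = (6 * n + 11) + 2 by omega, Nat.doubleFactorial_add_two,
          show 6 * n + 11 = (6 * n + 9) + 2 by omega, Nat.doubleFactorial_add_two,
          show 6 * n + 9 = (6 * n + 7) + 2 by omega, Nat.doubleFactorial_add_two]
      have hdf2 : ((6 * (n + 1) + 3)‼ : ℕ) = (6 * n + 9) * (6 * n + 7)‼ := by
        rw [show 6 * (n + 1) + 3 = (6 * n + 7) + 2 by omega, Nat.doubleFactorial_add_two]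
      have hfa : ((n + 2))! = (n + 2) * ((n + 1) * n !) := by
        rw [Nat.factorial_succ, Nat.factorial_succ]
      have hfa2 : ((n + 1))! = (n + 1) * n ! := Nat.factorial_succ _
      push_cast [hdf, hdf2, hfa, hfa2] at hr ⊢
      field_simp at hr ⊢
      apply mul_left_cancel₀ (show ((6 * (n : ℚ) + 16) * 3 ^ (n + 1) * ((n : ℚ) + 2)) ≠ 0 by positivity)
      linear_combination hr
  intro g hg
  obtain ⟨m, rfl⟩ : ∃ m, g = m + 2 := ⟨g - 2, by omega⟩
  have e1 : ((m + 2 : ℕ) : ℤ) - 2 = (m : ℤ) := by push_cast; ring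
  have e2 : ((m + 2 : ℕ) : ℤ) - 1 = ((m + 1 : ℕ) : ℤ) := by push_cast; ring
  have e3 : 6 * (m + 2) - 5 = 6 * m + 7 := by omega
  have e4 : 6 * (m + 2) - 3 = 6 * (m + 1) + 3 := by omega
  have e5 : m + 2 - 2 = m := by omega
  rw [e1, e2, e3, e4, e5, hB m]
  have hA' : b (m + 2) ((m + 1 : ℕ) : ℤ) = 2 ^ (m + 1) * (((6 * (m + 1) + 3)‼ : ℕ) : ℚ) /
      (3 ^ (m + 2) * (((m + 2))! : ℚ)) := hA (m + 1)
  rw [hA']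
  refine ⟨?_, by ring⟩
  have hdf2 : ((6 * (m + 1) + 3)‼ : ℕ) = (6 * m + 9) * (6 * m + 7)‼ := by
    rw [show 6 * (m + 1) + 3 = (6 * m + 7) + 2 by omega, Nat.doubleFactorial_add_two]
  have hfa : ((m + 2))! = (m + 2) * ((m + 1) * m !) := by
    rw [Nat.factorial_succ, Nat.factorial_succ]
  push_cast [hdf2, hfa]
  have h1 : ((6 * m + 7)‼ : ℚ) ≠ 0 := hdfne _
  have h2 : ((m ! : ℕ) : ℚ) ≠ 0 := hfne _
  field_simp
  ring
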